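/- Let c : ℝ → ℝ be convex, nonincreasing, with c(K) → 0 as K → ∞ and c(K) + K bounded as K → −∞, and let μ be a probability measure on ℝ with finite first moment such that c(K) = ∫ (x − K)⁺ dμ(x) for all K ∈ ℝ. Then for every K ∈ ℝ, μ((K,∞)) = −c'(K+), where c'(K+) denotes the right derivative of c at K. -/

import Mathlib

open MeasureTheory Set Filter

/-- Breeden–Litzenberger: if `c(K) = ∫ (x − K)⁺ dμ`, then
`μ((K,∞)) = −c'(K+)`. -/
theorem stmt17 (c : ℝ → ℝ)
    (hconv : ConvexOn ℝ Set.univ c)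
    (hanti : Antitone c)
    (hlim : Tendsto c atTop (nhds 0))
    (hbdd : ∃ C : ℝ, ∀ K : ℝ, K ≤ 0 → |c K + K| ≤ C)
    (μ : Measure ℝ) [IsProbabilityMeasure μ]
    (hmom : Integrable (fun x : ℝ => x) μ)
    (hc : ∀ K : ℝ, c K = ∫ x, max (x - K) 0 ∂μ)
    (K d : ℝ) (hd : HasDerivWithinAt c d (Set.Ioi K) K) :
    (μ (Set.Ioi K)).toReal = -d := by
  have hint : ∀ t : ℝ, Integrable (fun x => max (x - t) 0) μ := fun t =>
    (hmom.sub (integrable_const t)).pos_part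
  set L : ℝ := (μ (Set.Ioi K)).toReal with hL
  have hLval : ∫ x, -(Set.Ioi K).indicator (fun _ => (1:ℝ)) x ∂μ = -L := by
    rw [integral_neg, integral_indicator measurableSet_Ioi]
    simp [hL, measureReal_def]
  have key : HasDerivWithinAt c (-L) (Set.Ioi K) K := by
    rw [hasDerivWithinAt_iff_tendsto_slope]
    have hIoi : Set.Ioi K \ {K} = Set.Ioi K :=
      Set.diff_singleton_eq_self (by simp)
    rw [hIoi]
    have main : Tendsto (fun t => ∫ x, (max (x - t) 0 - max (x - K) 0) / (t - K) ∂μ)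
        (nhdsWithin K (Set.Ioi K)) (nhds (∫ x, -(Set.Ioi K).indicator (fun _ => (1:ℝ)) x ∂μ)) := by
      apply tendsto_integral_filter_of_dominated_convergence (fun _ => (1:ℝ))
      · filter_upwards with t
        exact (((continuous_id.sub continuous_const).max continuous_const).sub
          ((continuous_id.sub continuous_const).max continuous_const)).div_const _ |>.aestronglyMeasurable
      · filter_upwards [self_mem_nhdsWithin] with t (ht : t ∈ Set.Ioi K)
        filter_upwards with x
        have htK : (0:ℝ) < t - K := sub_pos.mpr ht
        rw [Real.norm_eq_abs, abs_div, abs_of_pos htK, div_le_one htK]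
        calc |max (x - t) 0 - max (x - K) 0| ≤ |(x - t) - (x - K)| :=
              abs_max_sub_max_le_abs _ _ _
          _ = t - K := by rw [abs_of_nonpos (by linarith)]; ring
      · exact integrable_const 1
      · filter_upwards with x
        rcases le_or_gt x K with hx | hx
        · have : ∀ᶠ t in nhdsWithin K (Set.Ioi K),
              (max (x - t) 0 - max (x - K) 0) / (t - K) = 0 := by
            filter_upwards [self_mem_nhdsWithin] with t (ht : t ∈ Set.Ioi K)
            have ht' : K < t := ht
            rw [max_eq_right (by linarith : x - t ≤ 0), max_eq_right (by linarith : x - K ≤ 0)]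
            simp
          have hval : -(Set.Ioi K).indicator (fun _ => (1:ℝ)) x = 0 := by
            simp [Set.indicator_of_notMem, not_lt.mpr hx]
          rw [hval]
          exact Tendsto.congr' (this.mono fun t h => h.symm) tendsto_const_nhds
        · have hev : ∀ᶠ t in nhdsWithin K (Set.Ioi K),
              (max (x - t) 0 - max (x - K) 0) / (t - K) = -1 := by
            filter_upwards [Ioo_mem_nhdsGT_of_mem ⟨le_refl K, hx⟩] with t ht
            rw [max_eq_left (by linarith [ht.2] : (0:ℝ) ≤ x - t),
              max_eq_left (by linarith : (0:ℝ) ≤ x - K)]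
            rw [div_eq_iff (by linarith [ht.1] : t - K ≠ 0)]
            ring
          have hval : -(Set.Ioi K).indicator (fun _ => (1:ℝ)) x = -1 := by
            simp [Set.indicator_of_mem, hx]
          rw [hval]
          exact Tendsto.congr' (hev.mono fun t h => h.symm) tendsto_const_nhds
    rw [hLval] at main
    apply main.congr'
    filter_upwards [self_mem_nhdsWithin] with t (ht : t ∈ Set.Ioi K)
    rw [slope_def_field]
    rw [hc t, hc K, div_eq_inv_mul, ← integral_sub (hint t) (hint K)]
    rw [← smul_eq_mul, ← integral_smul]
    congr 1; ext x; rw [smul_eq_mul, div_eq_inv_mul]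
  have := (uniqueDiffWithinAt_Ioi K).eq_deriv _ hd key
  rw [this, neg_neg]
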